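/- (Aufbau principle) Let A, B be real symmetric M×M matrices with A positive semidefinite, and let P⋆ be a global minimizer of J over Gr(m,ℝ^M). Then there exist an orthonormal family (x₁,…,x_M) of vectors in ℝ^M and real numbers λ₁ ≤ λ₂ ≤ ⋯ ≤ λ_M such that P⋆ = Σ_{k=1}^{m} x_k x_kᵀ and G(P⋆) x_k = λ_k x_k for every 1 ≤ k ≤ M. In particular P⋆ and G(P⋆) commute and P⋆ projects onto a span of eigenvectors of G(P⋆) associated with its m smallest eigenvalues. -/

import Mathlib

open Matrix Filter Topology

noncomputable section

/-- The Grassmann manifold `Gr(m, ℝ^M)`. -/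
def Gr (M m : ℕ) (P : Matrix (Fin M) (Fin M) ℝ) : Prop :=
  P.IsSymm ∧ P * P = P ∧ P.trace = (m : ℝ)

/-- The cost function `J(P) = Tr(BP) - (1/2) Tr(APAP)`. -/
def Jfun {M : ℕ} (A B P : Matrix (Fin M) (Fin M) ℝ) : ℝ :=
  (B * P).trace - (1 / 2) * (A * P * A * P).trace

/-- The gradient `G(P) = B - APA`. -/
def Gmap {M : ℕ} (A B P : Matrix (Fin M) (Fin M) ℝ) : Matrix (Fin M) (Fin M) ℝ :=
  B - A * P * A

lemma mul_vecMulVec_eq (X : Matrix (Fin M) (Fin M) ℝ) (a b : Fin M → ℝ) :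
    X * vecMulVec a b = vecMulVec (X *ᵥ a) b := by
  ext i j
  simp only [mul_apply, vecMulVec_apply, mulVec, dotProduct, of_apply, Finset.sum_mul]
  exact Finset.sum_congr rfl fun k _ => by ring

lemma trace_vecMulVec (a b : Fin M → ℝ) : (vecMulVec a b).trace = a ⬝ᵥ b := by
  simp [trace, dotProduct, vecMulVec_apply, Matrix.diag]

lemma trace_mul_vecMulVec (X : Matrix (Fin M) (Fin M) ℝ) (a b : Fin M → ℝ) :
    (X * vecMulVec a b).trace = b ⬝ᵥ (X *ᵥ a) := by
  rw [mul_vecMulVec_eq, trace_vecMulVec, dotProduct_comm]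

lemma Jexpand (A B P Q : Matrix (Fin M) (Fin M) ℝ) :
    Jfun A B (P + Q) = Jfun A B P + ((B - A * P * A) * Q).trace - (1/2) * (A * Q * A * Q).trace := by
  simp only [Jfun, mul_add, add_mul, trace_add, Matrix.sub_mul, trace_sub, Matrix.mul_assoc]
  have : (A * (P * (A * Q))).trace = (A * (Q * (A * P))).trace := by
    rw [show A * (P * (A * Q)) = (A * P) * (A * Q) by noncomm_ring,
        show A * (Q * (A * P)) = (A * Q) * (A * P) by noncomm_ring, trace_mul_comm]
  rw [this]; ring

lemma trace_transpose_mul_self_nonneg (S : Matrix (Fin M) (Fin M) ℝ) :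
    0 ≤ (Sᵀ * S).trace := by
  simp only [trace, Matrix.diag, mul_apply, transpose_apply, ← sq]
  positivity

lemma trace_AQAQ_nonneg {A Q : Matrix (Fin M) (Fin M) ℝ} (hA : A.PosSemidef) (hQ : Q.IsSymm) :
    0 ≤ (A * Q * A * Q).trace := by
  obtain ⟨C, hC⟩ := (by open scoped MatrixOrder in exact CStarAlgebra.nonneg_iff_eq_star_mul_self.mp hA.nonneg :
    ∃ C : Matrix (Fin M) (Fin M) ℝ, A = Cᴴ * C)
  have hCt : (Cᴴ : Matrix (Fin M) (Fin M) ℝ) = Cᵀ := rfl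
  rw [hC, hCt]
  have h1 : Cᵀ * C * Q * (Cᵀ * C) * Q = Cᵀ * (C * Q * Cᵀ * (C * Q)) := by noncomm_ring
  have h2 : ((C * Q * Cᵀ)ᵀ : Matrix (Fin M) (Fin M) ℝ) = C * Q * Cᵀ := by
    rw [transpose_mul, transpose_mul, transpose_transpose, hQ.eq]; noncomm_ring
  calc (0:ℝ) ≤ ((C * Q * Cᵀ)ᵀ * (C * Q * Cᵀ)).trace := trace_transpose_mul_self_nonneg _
    _ = (Cᵀ * C * Q * (Cᵀ * C) * Q).trace := by
        rw [h2, show C * Q * Cᵀ * (C * Q * Cᵀ) = (C * Q * Cᵀ * (C * Q)) * Cᵀ by noncomm_ring,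
          trace_mul_comm, h1]

lemma aux_nonpos {γ α : ℝ} (h : ∀ r : ℝ, 0 ≤ r^2*γ + r*(1-r^2)*α) : α ≤ 0 := by
  by_contra h0
  push_neg at h0
  have hγ : 0 ≤ γ := by have := h 1; nlinarith
  set r := (γ + α + 1)/α with hrdef
  have hα : α ≠ 0 := ne_of_gt h0
  have hr0 : 0 < r := div_pos (by linarith) h0
  have hr1 : 1 ≤ r := (one_le_div h0).mpr (by linarith)
  have e1 : r * α = γ + α + 1 := div_mul_cancel₀ _ hα
  have hr := h r
  have e5 : r^2 * (r * α) = r^2 * (γ + α + 1) := by rw [e1]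
  have e2 : r ≤ r^2 := by nlinarith
  nlinarith [mul_le_mul_of_nonneg_right e2 (le_of_lt h0), mul_le_mul_of_nonneg_right e2 hγ]

lemma aux_zero {γ α : ℝ} (h : ∀ s c : ℝ, s^2 + c^2 = 1 → 0 ≤ s^2*γ + 2*s*c*α) : α = 0 := by
  have h' : ∀ r : ℝ, 0 ≤ r^2*γ + r*(1-r^2)*α := by
    intro r
    have hd : (0:ℝ) < 1 + r^2 := by positivity
    have := h (2*r/(1+r^2)) ((1-r^2)/(1+r^2)) (by field_simp; ring)
    have h4 : (0:ℝ) < 4 / (1+r^2)^2 := by positivity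
    have heq : (2*r/(1+r^2))^2*γ + 2*(2*r/(1+r^2))*((1-r^2)/(1+r^2))*α
        = (4/(1+r^2)^2) * (r^2*γ + r*(1-r^2)*α) := by field_simp; ring
    rw [heq] at this
    nlinarith
  have h1 : α ≤ 0 := aux_nonpos h'
  have h2 : -α ≤ 0 := aux_nonpos (γ := γ) (fun r => by have := h' (-r); nlinarith)
  linarith

lemma vecMulVec_mul_eq (a b : Fin M → ℝ) (X : Matrix (Fin M) (Fin M) ℝ) :
    vecMulVec a b * X = vecMulVec a (Xᵀ *ᵥ b) := by
  ext i j
  simp only [mul_apply, vecMulVec_apply, mulVec, dotProduct, transpose_apply, of_apply,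
    Finset.mul_sum]
  exact Finset.sum_congr rfl fun k _ => by ring

lemma vecMulVec_mul_vecMulVec (a b x y : Fin M → ℝ) :
    vecMulVec a b * vecMulVec x y = (b ⬝ᵥ x) • vecMulVec a y := by
  ext i j
  simp only [mul_apply, vecMulVec_apply, dotProduct, Matrix.smul_apply, smul_eq_mul, of_apply,
    Finset.sum_mul, Finset.mul_sum]
  exact Finset.sum_congr rfl fun k _ => by ring

lemma vecMulVec_smul_left (r : ℝ) (a b : Fin M → ℝ) :
    vecMulVec (r • a) b = r • vecMulVec a b := by
  ext i j; simp [vecMulVec_apply, mul_assoc]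

lemma vecMulVec_smul_right (r : ℝ) (a b : Fin M → ℝ) :
    vecMulVec a (r • b) = r • vecMulVec a b := by
  ext i j; simp [vecMulVec_apply]; ring

lemma vecMulVec_add_left (a a' b : Fin M → ℝ) :
    vecMulVec (a + a') b = vecMulVec a b + vecMulVec a' b := by
  ext i j; simp [vecMulVec_apply]; ring

lemma vecMulVec_add_right (a b b' : Fin M → ℝ) :
    vecMulVec a (b + b') = vecMulVec a b + vecMulVec a b' := by
  ext i j; simp [vecMulVec_apply]; ring

lemma transpose_vecMulVec (a b : Fin M → ℝ) :
    (vecMulVec a b)ᵀ = vecMulVec b a := by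
  ext i j; simp [vecMulVec_apply]; ring

lemma Gmap_isSymm {A B P : Matrix (Fin M) (Fin M) ℝ} (hA : A.IsSymm) (hB : B.IsSymm)
    (hPs : P.IsSymm) : (Gmap A B P).IsSymm := by
  unfold Gmap Matrix.IsSymm at *
  rw [transpose_sub, hB, transpose_mul, transpose_mul, hA, hPs, Matrix.mul_assoc]

lemma key_ineq {M m : ℕ} {A B P : Matrix (Fin M) (Fin M) ℝ}
    (hA : A.IsSymm) (hApsd : A.PosSemidef) (hB : B.IsSymm) (hP : Gr M m P)
    (hmin : ∀ P' : Matrix (Fin M) (Fin M) ℝ, Gr M m P' → Jfun A B P ≤ Jfun A B P')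
    (u v : Fin M → ℝ) (hu : P *ᵥ u = u) (hv : P *ᵥ v = 0)
    (huu : u ⬝ᵥ u = 1) (hvv : v ⬝ᵥ v = 1) :
    u ⬝ᵥ (Gmap A B P *ᵥ v) = 0 ∧
      u ⬝ᵥ (Gmap A B P *ᵥ u) ≤ v ⬝ᵥ (Gmap A B P *ᵥ v) := by
  set G := Gmap A B P with hG
  have hGs : G.IsSymm := Gmap_isSymm hA hB hP.1
  have huv : u ⬝ᵥ v = 0 := by
    have : P *ᵥ v = 0 := hv
    calc u ⬝ᵥ v = (P *ᵥ u) ⬝ᵥ v := by rw [hu]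
      _ = u ⬝ᵥ (Pᵀ *ᵥ v) := by
          rw [dotProduct_comm, dotProduct_mulVec, ← mulVec_transpose,
            dotProduct_comm (Pᵀ *ᵥ v) u]
      _ = 0 := by rw [hP.1.eq, hv, dotProduct_zero]
  have hgvu : v ⬝ᵥ (G *ᵥ u) = u ⬝ᵥ (G *ᵥ v) := by
    rw [dotProduct_mulVec, ← mulVec_transpose, hGs.eq, dotProduct_comm]
  -- main inequality for each (s,c) on the unit circle
  have main : ∀ s c : ℝ, s^2 + c^2 = 1 →
      0 ≤ s^2 * (v ⬝ᵥ (G *ᵥ v) - u ⬝ᵥ (G *ᵥ u)) + 2*s*c*(u ⬝ᵥ (G *ᵥ v)) := by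
    intro s c hsc
    set w : Fin M → ℝ := c • u + s • v with hw
    set Q : Matrix (Fin M) (Fin M) ℝ := vecMulVec w w - vecMulVec u u with hQ
    have hPw : P *ᵥ w = c • u := by
      rw [hw, mulVec_add, mulVec_smul, mulVec_smul, hu, hv, smul_zero, add_zero]
    have hww : w ⬝ᵥ w = 1 := by
      rw [hw]
      simp only [dotProduct_add, add_dotProduct, dotProduct_smul, smul_dotProduct,
        smul_eq_mul]
      rw [huu, huv, hvv, dotProduct_comm v u, huv]
      nlinarith
    have hwu : w ⬝ᵥ u = c := by
      rw [hw]
      simp only [add_dotProduct, smul_dotProduct, smul_eq_mul]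
      rw [huu, dotProduct_comm v u, huv]; ring
    have huw : u ⬝ᵥ w = c := by
      rw [hw]
      simp only [dotProduct_add, dotProduct_smul, smul_eq_mul]
      rw [huu, huv]; ring
    have hQsym : Q.IsSymm := by
      rw [hQ, Matrix.IsSymm, transpose_sub, transpose_vecMulVec, transpose_vecMulVec]
    have hPQ : P * Q = c • vecMulVec u w - vecMulVec u u := by
      rw [hQ, Matrix.mul_sub, mul_vecMulVec_eq, mul_vecMulVec_eq, hPw, hu,
        vecMulVec_smul_left]
    have hQP : Q * P = c • vecMulVec w u - vecMulVec u u := by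
      rw [hQ, Matrix.sub_mul, vecMulVec_mul_eq, vecMulVec_mul_eq, hP.1.eq, hPw, hu,
        vecMulVec_smul_right]
    have hQQ : Q * Q = vecMulVec w w - c • vecMulVec w u - c • vecMulVec u w
        + vecMulVec u u := by
      rw [hQ, Matrix.sub_mul, Matrix.mul_sub, Matrix.mul_sub,
        vecMulVec_mul_vecMulVec, vecMulVec_mul_vecMulVec,
        vecMulVec_mul_vecMulVec, vecMulVec_mul_vecMulVec, hww, hwu, huw, huu,
        one_smul, one_smul]
      abel
    have hGr' : Gr M m (P + Q) := by
      refine ⟨?_, ?_, ?_⟩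
      · rw [Matrix.IsSymm, transpose_add, hP.1.eq, hQsym.eq]
      · rw [add_mul, mul_add, mul_add, hP.2.1, hPQ, hQP, hQQ, hQ]
        abel
      · rw [trace_add, hP.2.2, hQ, trace_sub, trace_vecMulVec, trace_vecMulVec, hww, huu]
        ring
    have h0 := hmin (P + Q) hGr'
    rw [Jexpand] at h0
    have h1 : 0 ≤ ((B - A * P * A) * Q).trace - (1/2) * (A * Q * A * Q).trace := by
      linarith
    have h2 : 0 ≤ (A * Q * A * Q).trace := trace_AQAQ_nonneg hApsd hQsym
    have h3 : 0 ≤ (G * Q).trace := by rw [hG]; unfold Gmap; linarith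
    have h4 : (G * Q).trace = w ⬝ᵥ (G *ᵥ w) - u ⬝ᵥ (G *ᵥ u) := by
      rw [hQ, Matrix.mul_sub, trace_sub, trace_mul_vecMulVec, trace_mul_vecMulVec]
    have h5 : w ⬝ᵥ (G *ᵥ w) = c^2 * (u ⬝ᵥ (G *ᵥ u)) + 2*s*c*(u ⬝ᵥ (G *ᵥ v))
        + s^2 * (v ⬝ᵥ (G *ᵥ v)) := by
      rw [hw, mulVec_add, mulVec_smul, mulVec_smul]
      simp only [dotProduct_add, add_dotProduct, dotProduct_smul, smul_dotProduct,
        smul_eq_mul]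
      rw [hgvu]; ring
    rw [h4, h5] at h3
    have e : s^2 * (v ⬝ᵥ (G *ᵥ v) - u ⬝ᵥ (G *ᵥ u)) + 2*s*c*(u ⬝ᵥ (G *ᵥ v))
        = (c^2 * (u ⬝ᵥ (G *ᵥ u)) + 2*s*c*(u ⬝ᵥ (G *ᵥ v)) + s^2 * (v ⬝ᵥ (G *ᵥ v))
            - u ⬝ᵥ (G *ᵥ u)) + (1 - s^2 - c^2) * (u ⬝ᵥ (G *ᵥ u)) := by ring
    rw [e, show (1 - s^2 - c^2 : ℝ) = 0 by linarith, zero_mul, add_zero]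
    exact h3
  constructor
  · exact aux_zero main
  · have := main 1 0 (by norm_num)
    linarith

lemma dotProduct_self_pos {y : Fin M → ℝ} (hy : y ≠ 0) : 0 < y ⬝ᵥ y := by
  rcases Function.ne_iff.mp hy with ⟨i, hi⟩
  have hi' : y i ≠ 0 := hi
  exact Finset.sum_pos' (fun j _ => mul_self_nonneg _)
    ⟨i, Finset.mem_univ i, mul_self_pos.mpr hi'⟩

lemma orth_of_minimizer {M m : ℕ} {A B P : Matrix (Fin M) (Fin M) ℝ}
    (hA : A.IsSymm) (hApsd : A.PosSemidef) (hB : B.IsSymm) (hP : Gr M m P)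
    (hmin : ∀ P' : Matrix (Fin M) (Fin M) ℝ, Gr M m P' → Jfun A B P ≤ Jfun A B P')
    (a b : Fin M → ℝ) :
    (P *ᵥ a) ⬝ᵥ (Gmap A B P *ᵥ (b - P *ᵥ b)) = 0 := by
  set G := Gmap A B P with hG
  set u' := P *ᵥ a with hu'
  set v' := b - P *ᵥ b with hv'
  by_cases hu0 : u' = 0
  · rw [hu0, zero_dotProduct]
  by_cases hv0 : v' = 0
  · rw [hv0, mulVec_zero, dotProduct_zero]
  have hPu' : P *ᵥ u' = u' := by
    rw [hu', mulVec_mulVec, hP.2.1]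
  have hPv' : P *ᵥ v' = 0 := by
    rw [hv', mulVec_sub, mulVec_mulVec, hP.2.1, sub_self]
  have hnu : 0 < u' ⬝ᵥ u' := dotProduct_self_pos hu0
  have hnv : 0 < v' ⬝ᵥ v' := dotProduct_self_pos hv0
  set ru := (Real.sqrt (u' ⬝ᵥ u'))⁻¹ with hru
  set rv := (Real.sqrt (v' ⬝ᵥ v'))⁻¹ with hrv
  have hsu : Real.sqrt (u' ⬝ᵥ u') > 0 := Real.sqrt_pos.mpr hnu
  have hsv : Real.sqrt (v' ⬝ᵥ v') > 0 := Real.sqrt_pos.mpr hnv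
  have key := key_ineq hA hApsd hB hP hmin (ru • u') (rv • v')
    (by rw [mulVec_smul, hPu']) (by rw [mulVec_smul, hPv', smul_zero])
    (by
      rw [dotProduct_smul, smul_dotProduct, smul_eq_mul, smul_eq_mul, ← mul_assoc, hru]
      rw [← Real.sqrt_mul_self (le_of_lt hnu)] 
      field_simp
      rw [Real.sq_sqrt (by positivity)])
    (by
      rw [dotProduct_smul, smul_dotProduct, smul_eq_mul, smul_eq_mul, ← mul_assoc, hrv]
      rw [← Real.sqrt_mul_self (le_of_lt hnv)]
      field_simp
      rw [Real.sq_sqrt (by positivity)])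
  have h1 := key.1
  rw [mulVec_smul, dotProduct_smul, smul_dotProduct, smul_eq_mul, smul_eq_mul] at h1
  have hru0 : ru ≠ 0 := by positivity
  have hrv0 : rv ≠ 0 := by positivity
  have := mul_eq_zero.mp h1
  rcases this with h | h
  · exact absurd h hrv0
  rcases mul_eq_zero.mp h with h | h
  · exact absurd h hru0
  · exact h

lemma commute_PG {M m : ℕ} {A B P : Matrix (Fin M) (Fin M) ℝ}
    (hA : A.IsSymm) (hApsd : A.PosSemidef) (hB : B.IsSymm) (hP : Gr M m P)
    (hmin : ∀ P' : Matrix (Fin M) (Fin M) ℝ, Gr M m P' → Jfun A B P ≤ Jfun A B P') :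
    P * Gmap A B P = Gmap A B P * P := by
  set G := Gmap A B P with hG
  have hGs : G.IsSymm := Gmap_isSymm hA hB hP.1
  have hE : P * G * (1 - P) = 0 := by
    ext i j
    have h0 := orth_of_minimizer hA hApsd hB hP hmin (Pi.single i 1) (Pi.single j 1)
    have e1 : P *ᵥ Pi.single i 1 = fun k => P k i := by
      ext k; simp [mulVec_single]
    have e2 : (Pi.single j 1 : Fin M → ℝ) - P *ᵥ Pi.single j 1
        = fun l => (1 - P) l j := by
      ext l; simp [mulVec_single, Matrix.sub_apply, one_apply, Pi.single_apply, eq_comm]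
    rw [e1, e2] at h0
    have : ((P * G * (1 - P)) i j : ℝ)
        = (fun k => P k i) ⬝ᵥ (G *ᵥ fun l => (1 - P) l j) := by
      simp only [mul_apply, dotProduct, mulVec, dotProduct, Finset.sum_mul, Finset.mul_sum]
      rw [Finset.sum_comm]
      refine Finset.sum_congr rfl fun k _ => ?_
      refine Finset.sum_congr rfl fun l _ => ?_
      rw [hP.1.apply i k]
      ring
    rw [this, h0, Matrix.zero_apply]
  have hPGP : P * G = P * G * P := by
    have := hE
    rw [Matrix.mul_sub, Matrix.mul_one, sub_eq_zero] at this
    exact this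
  have hEt : (1 - P) * G * P = 0 := by
    have := congrArg Matrix.transpose hE
    rw [transpose_mul, transpose_mul, transpose_sub, transpose_one, hP.1.eq, hGs.eq,
      transpose_zero] at this
    rw [← Matrix.mul_assoc] at this
    exact this
  have hGPP : G * P = P * G * P := by
    have h' : G * P - P * G * P = 0 := by rw [← hEt]; noncomm_ring
    exact sub_eq_zero.mp h'
  rw [hPGP, hGPP]

lemma eigen_bound (X : Matrix (Fin M) (Fin M) ℝ) {y : Fin M → ℝ} {t : ℝ}
    (hy : y ≠ 0) (hXy : X *ᵥ y = t • y) : t^2 ≤ (Xᵀ * X).trace := by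
  have hds : 0 < y ⬝ᵥ y := dotProduct_self_pos hy
  have hXyXy : (X *ᵥ y) ⬝ᵥ (X *ᵥ y) = t^2 * (y ⬝ᵥ y) := by
    rw [hXy]
    simp only [dotProduct_smul, smul_dotProduct, smul_eq_mul]
    ring
  have hCS : (X *ᵥ y) ⬝ᵥ (X *ᵥ y) ≤ (Xᵀ * X).trace * (y ⬝ᵥ y) := by
    have hrow : ∀ i : Fin M, (X *ᵥ y) i * (X *ᵥ y) i
        ≤ (∑ j, X i j ^ 2) * (y ⬝ᵥ y) := by
      intro i
      have := Finset.sum_mul_sq_le_sq_mul_sq Finset.univ (fun j => X i j) y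
      simpa [mulVec, dotProduct, ← sq] using this
    calc (X *ᵥ y) ⬝ᵥ (X *ᵥ y) = ∑ i, (X *ᵥ y) i * (X *ᵥ y) i := rfl
      _ ≤ ∑ i, (∑ j, X i j ^ 2) * (y ⬝ᵥ y) := Finset.sum_le_sum fun i _ => hrow i
      _ = (Xᵀ * X).trace * (y ⬝ᵥ y) := by
          rw [← Finset.sum_mul]
          congr 1
          simp only [trace, Matrix.diag, mul_apply, transpose_apply, ← sq]
          rw [Finset.sum_comm]
  rw [hXyXy] at hCS
  exact le_of_mul_le_mul_right hCS hds

lemma lower_set_eq_filter {M m : ℕ} (T : Finset (Fin M)) (hcard : T.card = m)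
    (hlow : ∀ a ∈ T, ∀ b ∉ T, a < b) :
    T = Finset.univ.filter (fun k : Fin M => (k : ℕ) < m) := by
  ext a
  simp only [Finset.mem_filter, Finset.mem_univ, true_and]
  constructor
  · intro ha
    by_contra hc
    push_neg at hc
    have hsub : Finset.Iic a ⊆ T := by
      intro b hb
      by_contra hbT
      exact absurd (Finset.mem_Iic.mp hb) (not_le.mpr (hlow a ha b hbT)).elim
    have := Finset.card_le_card hsub
    rw [Fin.card_Iic, hcard] at this
    omega
  · intro ha
    by_contra hc
    have hsub : T ⊆ Finset.Iio a := by
      intro t ht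
      exact Finset.mem_Iio.mpr (hlow t ht a hc)
    have := Finset.card_le_card hsub
    rw [Fin.card_Iio, hcard] at this
    omega

lemma sum_vecMulVec_eq_one {M : ℕ} {y : Fin M → Fin M → ℝ}
    (hortho : ∀ i j, y i ⬝ᵥ y j = if i = j then (1:ℝ) else 0) :
    ∑ i, vecMulVec (y i) (y i) = (1 : Matrix (Fin M) (Fin M) ℝ) := by
  set Y : Matrix (Fin M) (Fin M) ℝ := Matrix.of y with hY
  have h1 : Y * Yᵀ = 1 := by
    ext i j
    simp only [mul_apply, transpose_apply, one_apply, hY, Matrix.of_apply]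
    exact hortho i j
  have h2 : Yᵀ * Y = 1 := mul_eq_one_comm.mp h1
  ext a b
  have := congrFun (congrFun h2 a) b
  simp only [mul_apply, transpose_apply, hY, Matrix.of_apply] at this
  simp only [Finset.sum_apply, Matrix.sum_apply, vecMulVec_apply]
  rw [← this]

lemma vecMulVec_zero_left (b : Fin M → ℝ) : vecMulVec (0 : Fin M → ℝ) b = 0 := by
  ext i j; simp [vecMulVec_apply]

theorem stmt_2' {M m : ℕ} (hM : 2 ≤ M) (hm1 : 1 ≤ m) (hm2 : m ≤ M - 1)
    (A B : Matrix (Fin M) (Fin M) ℝ) (hA : A.IsSymm) (hApsd : A.PosSemidef)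
    (hB : B.IsSymm) (Pstar : Matrix (Fin M) (Fin M) ℝ) (hP : Gr M m Pstar)
    (hmin : ∀ P : Matrix (Fin M) (Fin M) ℝ, Gr M m P → Jfun A B Pstar ≤ Jfun A B P) :
    ∃ x : Fin M → (Fin M → ℝ), ∃ lam : Fin M → ℝ,
      (∀ k l : Fin M, x k ⬝ᵥ x l = if k = l then (1 : ℝ) else 0) ∧
      Monotone lam ∧
      Pstar = ∑ k ∈ Finset.univ.filter (fun k : Fin M => (k : ℕ) < m),
        vecMulVec (x k) (x k) ∧
      ∀ k : Fin M, (Gmap A B Pstar).mulVec (x k) = lam k • x k := by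
  classical
  set G := Gmap A B Pstar with hG
  have hGs : G.IsSymm := Gmap_isSymm hA hB hP.1
  have hcomm : Pstar * G = G * Pstar := commute_PG hA hApsd hB hP hmin
  set TF := (Gᵀ * G).trace with hTF
  have hTF0 : 0 ≤ TF := trace_transpose_mul_self_nonneg G
  set c : ℝ := 2 * Real.sqrt TF + 1 with hc
  have hsq : Real.sqrt TF ^ 2 = TF := Real.sq_sqrt hTF0
  have hsqnn : 0 ≤ Real.sqrt TF := Real.sqrt_nonneg TF
  set Hm : Matrix (Fin M) (Fin M) ℝ := G - c • Pstar with hHm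
  have hHs : Hm.IsSymm := by
    rw [Matrix.IsSymm, hHm, transpose_sub, transpose_smul, hGs.eq, hP.1.eq]
  have hH : Hm.IsHermitian := hHs
  set y : Fin M → Fin M → ℝ :=
    fun i => (WithLp.equiv 2 (Fin M → ℝ)) (hH.eigenvectorBasis i) with hy
  set μ : Fin M → ℝ := hH.eigenvalues with hμ
  have hHy : ∀ i, Hm *ᵥ y i = μ i • y i := fun i => hH.mulVec_eigenvectorBasis i
  have hyo : ∀ i j, y i ⬝ᵥ y j = if i = j then (1:ℝ) else 0 := by
    intro i j
    have horth := hH.eigenvectorBasis.orthonormal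
    rw [orthonormal_iff_ite] at horth
    have := horth i j
    simp only [PiLp.inner_apply, RCLike.inner_apply, conj_trivial] at this
    rw [← this, dotProduct_comm]
    rfl
  have hcommH : Pstar * Hm = Hm * Pstar := by
    rw [hHm, Matrix.mul_sub, Matrix.sub_mul, hcomm, mul_smul_comm, smul_mul_assoc, hP.2.1]
  -- each eigenvector is in ran P or ker P
  have hblock : ∀ i, Pstar *ᵥ y i = y i ∨ Pstar *ᵥ y i = 0 := by
    intro i
    set y1 := Pstar *ᵥ y i with hy1
    set y0 := y i - y1 with hy0
    by_cases h1 : y1 = 0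
    · right; exact h1
    by_cases h0 : y0 = 0
    · left; rw [hy1]; rw [sub_eq_zero] at h0; exact h0.symm
    exfalso
    have hPy1 : Pstar *ᵥ y1 = y1 := by rw [hy1, mulVec_mulVec, hP.2.1]
    have hPy0 : Pstar *ᵥ y0 = 0 := by
      rw [hy0, mulVec_sub, hPy1]
      exact sub_eq_zero.mpr hy1.symm
    have hHy1 : Hm *ᵥ y1 = μ i • y1 := by
      rw [hy1, mulVec_mulVec, ← hcommH, ← mulVec_mulVec, hHy i, mulVec_smul]
    have hHy0 : Hm *ᵥ y0 = μ i • y0 := by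
      rw [hy0, mulVec_sub, hHy1, hHy i, smul_sub]
    have hGeq : G = Hm + c • Pstar := by rw [hHm, sub_add_cancel]
    have hGy1 : G *ᵥ y1 = (μ i + c) • y1 := by
      rw [hGeq, add_mulVec, hHy1, smul_mulVec, hPy1]
      exact (add_smul (μ i) c y1).symm
    have hGy0 : G *ᵥ y0 = μ i • y0 := by
      rw [hGeq, add_mulVec, hHy0, smul_mulVec, hPy0, smul_zero, add_zero]
    have hb1 : (μ i + c)^2 ≤ TF := by
      have := eigen_bound G h1 hGy1; rwa [← hTF] at this
    have hb0 : (μ i)^2 ≤ TF := by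
      have := eigen_bound G h0 hGy0; rwa [← hTF] at this
    rw [hc] at hb1
    have har : 0 ≤ μ i + Real.sqrt TF := by nlinarith [hb0, hsq, hsqnn]
    nlinarith [hb1, hsq, hsqnn, har]
  set S : Finset (Fin M) := Finset.univ.filter (fun i => Pstar *ᵥ y i = y i) with hS
  have hymem : ∀ i, i ∈ S ↔ Pstar *ᵥ y i = y i := by
    intro i; rw [hS, Finset.mem_filter]; simp
  have hnotmem : ∀ i, i ∉ S → Pstar *ᵥ y i = 0 := by
    intro i hi
    rcases hblock i with h | h
    · exact absurd ((hymem i).mpr h) hi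
    · exact h
  -- resolution of identity
  have hres : ∑ i, vecMulVec (y i) (y i) = (1 : Matrix (Fin M) (Fin M) ℝ) :=
    sum_vecMulVec_eq_one hyo
  -- cardinality of S
  have htr : Pstar.trace = ∑ i, (y i ⬝ᵥ (Pstar *ᵥ y i)) := by
    conv_lhs => rw [show Pstar = Pstar * 1 from (Matrix.mul_one _).symm, ← hres]
    rw [Finset.mul_sum, trace_sum]
    exact Finset.sum_congr rfl fun i _ => trace_mul_vecMulVec _ _ _
  have htr2 : ∑ i, (y i ⬝ᵥ (Pstar *ᵥ y i)) = ∑ i, (if i ∈ S then (1:ℝ) else 0) := by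
    refine Finset.sum_congr rfl fun i _ => ?_
    by_cases hi : i ∈ S
    · rw [if_pos hi, (hymem i).mp hi, hyo i i, if_pos rfl]
    · rw [if_neg hi, hnotmem i hi, dotProduct_zero]
  have hcardS : S.card = m := by
    have : (m : ℝ) = (S.card : ℝ) := by
      rw [← hP.2.2, htr, htr2, Finset.sum_boole, Finset.filter_mem_eq_inter,
        Finset.univ_inter]
    exact_mod_cast this.symm
  -- decomposition of P
  have hPdecomp : Pstar = ∑ i ∈ S, vecMulVec (y i) (y i) := by
    conv_lhs => rw [show Pstar = Pstar * 1 from (Matrix.mul_one _).symm, ← hres]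
    rw [Finset.mul_sum]
    rw [← Finset.sum_filter_add_sum_filter_not Finset.univ (fun i => i ∈ S)
      (fun i => Pstar * vecMulVec (y i) (y i))]
    have e1 : ∀ i ∈ Finset.univ.filter (fun i => i ∈ S),
        Pstar * vecMulVec (y i) (y i) = vecMulVec (y i) (y i) := by
      intro i hi
      rw [mul_vecMulVec_eq, (hymem i).mp (Finset.mem_filter.mp hi).2]
    have e2 : ∀ i ∈ Finset.univ.filter (fun i => i ∉ S),
        Pstar * vecMulVec (y i) (y i) = 0 := by
      intro i hi
      rw [mul_vecMulVec_eq, hnotmem i (Finset.mem_filter.mp hi).2, vecMulVec_zero_left]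
    rw [Finset.sum_congr rfl e1, Finset.sum_congr rfl e2, Finset.sum_const_zero, add_zero]
    congr 1
    ext i
    simp [hS]
  -- eigen relation for G
  set gval : Fin M → ℝ := fun i => if i ∈ S then μ i + c else μ i with hgval
  have hGy : ∀ i, G *ᵥ y i = gval i • y i := by
    intro i
    have hGeq : G = Hm + c • Pstar := by rw [hHm, sub_add_cancel]
    by_cases hi : i ∈ S
    · rw [hgval]; simp only [if_pos hi]
      rw [hGeq, add_mulVec, hHy i, smul_mulVec, (hymem i).mp hi]
      exact (add_smul (μ i) c (y i)).symm
    · rw [hgval]; simp only [if_neg hi]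
      rw [hGeq, add_mulVec, hHy i, smul_mulVec, hnotmem i hi, smul_zero, add_zero]
  have hray : ∀ i, y i ⬝ᵥ (G *ᵥ y i) = gval i := by
    intro i
    rw [hGy i, dotProduct_smul, smul_eq_mul, hyo i i, if_pos rfl, mul_one]
  -- ordering across blocks
  have hSorder : ∀ i ∈ S, ∀ j, j ∉ S → gval i ≤ gval j := by
    intro i hi j hj
    have hui : y i ⬝ᵥ y i = 1 := by rw [hyo i i, if_pos rfl]
    have huj : y j ⬝ᵥ y j = 1 := by rw [hyo j j, if_pos rfl]
    have := (key_ineq hA hApsd hB hP hmin (y i) (y j)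
      ((hymem i).mp hi) (hnotmem j hj) hui huj).2
    rw [← hG] at this
    rwa [hray i, hray j] at this
  -- sorting
  set key : Fin M → ℝ ×ₗ ℝ :=
    fun i => toLex (gval i, if i ∈ S then (0:ℝ) else 1) with hkey
  set σ : Equiv.Perm (Fin M) := Tuple.sort key with hσ
  have hmono : Monotone (key ∘ σ) := Tuple.monotone_sort key
  have hstrict : ∀ i ∈ S, ∀ j, j ∉ S → key i < key j := by
    intro i hi j hj
    show toLex (gval i, if i ∈ S then (0:ℝ) else 1)
        < toLex (gval j, if j ∈ S then (0:ℝ) else 1)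
    rw [Prod.Lex.lt_iff]
    rcases lt_or_eq_of_le (hSorder i hi j hj) with h | h
    · exact Or.inl h
    · exact Or.inr ⟨h, by simp [hi, hj]⟩
  set T : Finset (Fin M) := Finset.univ.filter (fun k => σ k ∈ S) with hT
  have hcardT : T.card = m := by
    rw [← hcardS]
    apply Finset.card_bij' (fun a _ => σ a) (fun b _ => σ.symm b)
    · intro a ha; exact (Finset.mem_filter.mp ha).2
    · intro b hb; rw [hT, Finset.mem_filter]; simp [Equiv.apply_symm_apply, hb]
    · intro a _; simp
    · intro b _; simp
  have hlowT : ∀ a ∈ T, ∀ b, b ∉ T → a < b := by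
    intro a ha b hb
    have hsa : σ a ∈ S := (Finset.mem_filter.mp ha).2
    have hsb : σ b ∉ S := fun h => hb (Finset.mem_filter.mpr ⟨Finset.mem_univ b, h⟩)
    refine lt_of_not_ge fun h => ?_
    exact ((hmono h).not_gt (hstrict (σ a) hsa (σ b) hsb)).elim
  have hTeq : T = Finset.univ.filter (fun k : Fin M => (k : ℕ) < m) :=
    lower_set_eq_filter T hcardT (fun a ha b hb => hlowT a ha b hb)
  -- final assembly
  refine ⟨fun k => y (σ k), fun k => gval (σ k), ?_, ?_, ?_, ?_⟩
  · intro k l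
    rw [hyo (σ k) (σ l)]
    congr 1
    simp [Equiv.apply_eq_iff_eq]
  · intro k l hkl
    have := hmono hkl
    simp only [Function.comp_apply, hkey] at this
    rcases Prod.Lex.le_iff.mp this with h | h
    · exact le_of_lt h
    · exact le_of_eq h.1
  · rw [hPdecomp, ← hTeq]
    refine (Finset.sum_bij' (fun (k : Fin M) (_ : k ∈ T) => σ k)
      (fun (i : Fin M) (_ : i ∈ S) => σ.symm i) ?_ ?_ ?_ ?_ ?_).symm
    · intro a ha; exact (Finset.mem_filter.mp ha).2
    · intro b hb; rw [hT, Finset.mem_filter]; simp [Equiv.apply_symm_apply, hb]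
    · intro a _; simp
    · intro b _; simp
    · intro a _; rfl
  · intro k
    exact hGy (σ k)

/-- Aufbau principle: if `P⋆` is a global minimizer of `J` over `Gr(m,ℝ^M)`,
then there exist an orthonormal family `(x₁,…,x_M)` of `ℝ^M` and reals `λ₁ ≤ ⋯ ≤ λ_M`
with `P⋆ = Σ_{k ≤ m} x_k x_kᵀ` and `G(P⋆) x_k = λ_k x_k` for all `k`. -/
theorem stmt_2 {M m : ℕ} (hM : 2 ≤ M) (hm1 : 1 ≤ m) (hm2 : m ≤ M - 1)
    (A B : Matrix (Fin M) (Fin M) ℝ) (hA : A.IsSymm) (hApsd : A.PosSemidef)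
    (hB : B.IsSymm) (Pstar : Matrix (Fin M) (Fin M) ℝ) (hP : Gr M m Pstar)
    (hmin : ∀ P : Matrix (Fin M) (Fin M) ℝ, Gr M m P → Jfun A B Pstar ≤ Jfun A B P) :
    ∃ x : Fin M → (Fin M → ℝ), ∃ lam : Fin M → ℝ,
      (∀ k l : Fin M, x k ⬝ᵥ x l = if k = l then (1 : ℝ) else 0) ∧
      Monotone lam ∧
      Pstar = ∑ k ∈ Finset.univ.filter (fun k : Fin M => (k : ℕ) < m),
        vecMulVec (x k) (x k) ∧
      ∀ k : Fin M, (Gmap A B Pstar).mulVec (x k) = lam k • x k := by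
  exact stmt_2' hM hm1 hm2 A B hA hApsd hB Pstar hP hmin
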